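/- Let G = ([n], E) be a finite connected undirected graph with conductance φ(G), and let y ∈ ℝⁿ satisfy y₁ = ⋯ = y_{⌈n/2⌉} = 0 (after relabeling so that y is sorted increasingly) and y_i ≥ 0 for all i. Then ∑_{(i,j)∈E} |y_i - y_j| ≥ φ(G) · ∑_i |y_i|. -/

import Mathlib

open Finset

/-- For a nonnegative vector vanishing on at least half of the coordinates, the sum of
edge differences dominates the conductance times the ℓ₁ norm. -/
theorem edge_sum_ge_conductance (n : ℕ) (G : SimpleGraph (Fin n)) [DecidableRel G.Adj]
    (hconn : G.Connected) (y : Fin n → ℝ) (hy : ∀ i, 0 ≤ y i)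
    (hzero : (n + 1) / 2 ≤ (Finset.univ.filter fun i => y i = 0).card) :
    (1 / 2) * ∑ i, ∑ j, (if G.Adj i j then |y i - y j| else 0) ≥
      (sInf { r : ℝ | ∃ S : Finset (Fin n), S.Nonempty ∧ 2 * S.card ≤ n ∧
          r = (∑ i ∈ S, ∑ j ∈ Sᶜ, if G.Adj i j then (1 : ℝ) else 0) / (S.card : ℝ) })
        * ∑ i, |y i| := by
  rw [ge_iff_le]
  set Φ : ℝ := sInf { r : ℝ | ∃ S : Finset (Fin n), S.Nonempty ∧ 2 * S.card ≤ n ∧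
      r = (∑ i ∈ S, ∑ j ∈ Sᶜ, if G.Adj i j then (1 : ℝ) else 0) / (S.card : ℝ) } with hΦ
  have hbdd : BddBelow { r : ℝ | ∃ S : Finset (Fin n), S.Nonempty ∧ 2 * S.card ≤ n ∧
      r = (∑ i ∈ S, ∑ j ∈ Sᶜ, if G.Adj i j then (1 : ℝ) else 0) / (S.card : ℝ) } := by
    refine ⟨0, fun r hr => ?_⟩
    obtain ⟨S, -, -, rfl⟩ := hr
    apply div_nonneg
    · apply Finset.sum_nonneg; intro i _
      apply Finset.sum_nonneg; intro j _
      split <;> norm_num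
    · positivity
  suffices H : ∀ k (y : Fin n → ℝ), (∀ i, 0 ≤ y i) →
      (n + 1) / 2 ≤ (Finset.univ.filter fun i => y i = 0).card →
      (Finset.univ.filter fun i => y i ≠ 0).card = k →
      Φ * ∑ i, |y i| ≤ 1 / 2 * ∑ i, ∑ j, (if G.Adj i j then |y i - y j| else 0) by
    exact H _ y hy hzero rfl
  intro k
  induction k using Nat.strong_induction_on with
  | _ k IH =>
  intro y hy hzero hk
  rcases Nat.eq_zero_or_pos k with hk0 | hkpos
  · -- base case: y is identically zero
    subst hk0
    have hall : ∀ i, y i = 0 := by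
      intro i
      by_contra h
      have hmem : i ∈ Finset.univ.filter fun i => y i ≠ 0 := by simp [h]
      rw [Finset.card_eq_zero] at hk
      simp [hk] at hmem
    have h1 : ∑ i, |y i| = 0 := by simp [hall]
    rw [h1, mul_zero]
    apply mul_nonneg (by norm_num)
    apply Finset.sum_nonneg; intro i _
    apply Finset.sum_nonneg; intro j _
    split <;> positivity
  · set T : Finset (Fin n) := Finset.univ.filter (fun i => y i ≠ 0) with hT
    have hTne : T.Nonempty := Finset.card_pos.mp (by omega)
    set m : ℝ := T.inf' hTne y with hmdef
    obtain ⟨i0, hi0T, hi0⟩ := Finset.exists_mem_eq_inf' hTne y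
    have hmle : ∀ i, y i ≠ 0 → m ≤ y i := by
      intro i h
      exact Finset.inf'_le y (by simp [hT, h])
    have hi0ne : y i0 ≠ 0 := by
      have := Finset.mem_filter.mp (hT ▸ hi0T)
      exact this.2
    have hmpos : 0 < m := by
      rw [hmdef, hi0]
      exact lt_of_le_of_ne (hy i0) (Ne.symm hi0ne)
    set y' : Fin n → ℝ := fun i => if y i = 0 then 0 else y i - m with hy'def
    have hy' : ∀ i, 0 ≤ y' i := by
      intro i
      simp only [hy'def]
      split
      · exact le_refl 0
      · next h => linarith [hmle i h]
    -- ℓ¹ norm decomposition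
    have hA : ∑ i, |y i| = (∑ i, |y' i|) + m * T.card := by
      have hpt : ∀ i, |y i| = |y' i| + (if y i = 0 then 0 else m) := by
        intro i
        rw [abs_of_nonneg (hy i), abs_of_nonneg (hy' i)]
        simp only [hy'def]
        by_cases h : y i = 0 <;> simp [h]
      rw [Finset.sum_congr rfl (fun i _ => hpt i), Finset.sum_add_distrib]
      congr 1
      have : (∑ i, (if y i = 0 then (0:ℝ) else m)) = ∑ i ∈ T, m := by
        rw [hT, Finset.sum_filter]
        exact Finset.sum_congr rfl (fun i _ => by by_cases h : y i = 0 <;> simp [h])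
      rw [this, Finset.sum_const, nsmul_eq_mul, mul_comm]
    -- edge decomposition
    set a : Fin n → Fin n → ℝ :=
      fun i j => if G.Adj i j ∧ y i ≠ 0 ∧ y j = 0 then 1 else 0 with ha
    have hB : ∀ i j, (if G.Adj i j then |y i - y j| else 0)
        = (if G.Adj i j then |y' i - y' j| else 0) + m * (a i j + a j i) := by
      intro i j
      by_cases hadj : G.Adj i j
      · have hadj' : G.Adj j i := G.adj_symm hadj
        rw [if_pos hadj, if_pos hadj]
        by_cases hi : y i = 0 <;> by_cases hj : y j = 0
        · have e1 : y' i = 0 := by simp [hy'def, hi]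
          have e2 : y' j = 0 := by simp [hy'def, hj]
          have ea1 : a i j = 0 := by simp [ha, hi]
          have ea2 : a j i = 0 := by simp [ha, hj]
          rw [e1, e2, ea1, ea2, hi, hj]; simp
        · have e1 : y' i = 0 := by simp [hy'def, hi]
          have e2 : y' j = y j - m := by simp [hy'def, hj]
          have ea1 : a i j = 0 := by simp [ha, hi]
          have ea2 : a j i = 1 := by simp [ha, hadj', hj, hi]
          rw [e1, e2, ea1, ea2, hi, zero_sub, zero_sub, abs_neg, abs_neg,
            abs_of_nonneg (hy j), abs_of_nonneg (by linarith [hmle j hj])]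
          ring
        · have e1 : y' i = y i - m := by simp [hy'def, hi]
          have e2 : y' j = 0 := by simp [hy'def, hj]
          have ea1 : a i j = 1 := by simp [ha, hadj, hi, hj]
          have ea2 : a j i = 0 := by simp [ha, hj]
          rw [e1, e2, ea1, ea2, hj, sub_zero, sub_zero,
            abs_of_nonneg (hy i), abs_of_nonneg (by linarith [hmle i hi])]
          ring
        · have e1 : y' i = y i - m := by simp [hy'def, hi]
          have e2 : y' j = y j - m := by simp [hy'def, hj]
          have ea1 : a i j = 0 := by simp [ha, hj]
          have ea2 : a j i = 0 := by simp [ha, hi]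
          rw [e1, e2, ea1, ea2, show y i - m - (y j - m) = y i - y j by ring]
          ring
      · have ea1 : a i j = 0 := by simp [ha, hadj]
        have ea2 : a j i = 0 := by
          simp only [ha]
          rw [if_neg (fun h => hadj (G.adj_symm h.1))]
        rw [if_neg hadj, if_neg hadj, ea1, ea2]
        ring
    have hsum2 : ∑ i, ∑ j, (if G.Adj i j then |y i - y j| else 0)
        = (∑ i, ∑ j, (if G.Adj i j then |y' i - y' j| else 0))
          + m * (2 * ∑ i, ∑ j, a i j) := by
      have h1 : ∀ i : Fin n, ∑ j, (if G.Adj i j then |y i - y j| else 0)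
          = (∑ j, (if G.Adj i j then |y' i - y' j| else 0)) + (∑ j, m * (a i j + a j i)) := by
        intro i
        rw [← Finset.sum_add_distrib]
        exact Finset.sum_congr rfl (fun j _ => hB i j)
      rw [Finset.sum_congr rfl (fun i _ => h1 i), Finset.sum_add_distrib]
      congr 1
      have hswap : (∑ i : Fin n, ∑ j, a j i) = ∑ i, ∑ j, a i j := Finset.sum_comm
      have h2 : ∑ i : Fin n, ∑ j, m * (a i j + a j i)
          = m * (2 * ∑ i, ∑ j, a i j) := by
        simp only [← Finset.mul_sum, Finset.sum_add_distrib, hswap]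
        ring
      rw [h2]
    -- the cut of T
    have hTc : Tᶜ = Finset.univ.filter (fun j => y j = 0) := by
      ext j; simp [hT]
    have hAcut : (∑ i, ∑ j, a i j)
        = ∑ i ∈ T, ∑ j ∈ Tᶜ, (if G.Adj i j then (1:ℝ) else 0) := by
      rw [hTc, hT, Finset.sum_filter]
      apply Finset.sum_congr rfl
      intro i _
      by_cases hi : y i = 0
      · rw [if_neg (by simp [hi] : ¬ y i ≠ 0)]
        apply Finset.sum_eq_zero
        intro j _
        simp [ha, hi]
      · rw [if_pos hi, Finset.sum_filter]
        apply Finset.sum_congr rfl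
        intro j _
        by_cases hj : y j = 0 <;> by_cases hadj : G.Adj i j <;>
          simp [ha, hi, hj, hadj]
    -- size bound on T
    have hTeq : T = (Finset.univ.filter fun i => y i = 0)ᶜ := by
      ext i; simp [hT]
    have hTcard : T.card = n - (Finset.univ.filter fun i => y i = 0).card := by
      rw [hTeq, Finset.card_compl]
      simp
    have hzc : (Finset.univ.filter fun i => y i = 0).card ≤ n := by
      simpa using Finset.card_le_card (Finset.filter_subset _ (Finset.univ : Finset (Fin n)))
    have hcard2 : 2 * T.card ≤ n := by omega
    -- conductance bound
    have hφle : Φ ≤ (∑ i ∈ T, ∑ j ∈ Tᶜ, if G.Adj i j then (1:ℝ) else 0) / (T.card : ℝ) :=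
      csInf_le hbdd ⟨T, hTne, hcard2, rfl⟩
    have hcpos : (0:ℝ) < T.card := by exact_mod_cast Finset.card_pos.mpr hTne
    have hcut0 : Φ * T.card ≤ ∑ i ∈ T, ∑ j ∈ Tᶜ, (if G.Adj i j then (1:ℝ) else 0) :=
      (le_div_iff₀ hcpos).mp hφle
    -- apply the induction hypothesis to y'
    have hsub2 : (Finset.univ.filter fun i => y' i ≠ 0) ⊆ T := by
      intro i hi
      simp only [Finset.mem_filter, Finset.mem_univ, true_and] at hi
      simp only [hT, Finset.mem_filter, Finset.mem_univ, true_and]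
      intro h0
      apply hi
      simp [hy'def, h0]
    have hsslt : (Finset.univ.filter fun i => y' i ≠ 0) ⊂ T := by
      rw [Finset.ssubset_iff_of_subset hsub2]
      refine ⟨i0, hi0T, ?_⟩
      simp only [Finset.mem_filter, Finset.mem_univ, true_and, not_not]
      simp only [hy'def, if_neg hi0ne]
      rw [hmdef, hi0]
      ring
    have hzero' : (n + 1) / 2 ≤ (Finset.univ.filter fun i => y' i = 0).card := by
      refine le_trans hzero (Finset.card_le_card ?_)
      intro i hi
      simp only [Finset.mem_filter, Finset.mem_univ, true_and] at hi ⊢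
      simp [hy'def, hi]
    have hIH := IH _ (by rw [← hk]; exact Finset.card_lt_card hsslt) y' hy' hzero' rfl
    have key : m * (Φ * T.card)
        ≤ m * ∑ i ∈ T, ∑ j ∈ Tᶜ, (if G.Adj i j then (1:ℝ) else 0) :=
      mul_le_mul_of_nonneg_left hcut0 hmpos.le
    rw [hA, hsum2, hAcut]
    nlinarith [hIH]
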